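/- (Progress of the inexact cubic Newton step.) Let f: ℝ^d → ℝ be twice continuously differentiable with L₂-Lipschitz-continuous Hessian and let M ≥ 4L₂. Let v, x₊ ∈ ℝ^d, g ∈ ℝ^d, let H: ℝ^d → ℝ^d be a symmetric linear map, and let δ₂ ≥ 0 satisfy ‖(H − ∇²f(v))(x₊ − v)‖ ≤ δ₂‖x₊ − v‖. Let δ̄ ≥ 4δ₂ with δ̄ > 0, let τ ≥ 0, and suppose the gradient of the regularized model is τ-small at x₊: ‖g + H(x₊−v) + δ̄(x₊−v) + (M/2)‖x₊−v‖(x₊−v)‖ ≤ τ. Then τ²/δ̄ + (2/δ̄)‖g − ∇f(v)‖² + ⟨∇f(x₊), v − x₊⟩ ≥ min{ ‖∇f(x₊)‖²/(4δ̄), ‖∇f(x₊)‖^{3/2}·(1/(3M))^{1/2} }. -/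

import Mathlib

open scoped RealInnerProductSpace


set_option maxHeartbeats 2000000 in
lemma master_scalar (t a R M δb A N ip : ℝ) (ht : 0 ≤ t) (ha : 0 ≤ a) (hR : 0 ≤ R)
    (hM : 0 ≤ M) (hδb : 0 < δb) (hA0 : 0 ≤ A) (hN0 : 0 ≤ N)
    (hNle : N ≤ t + a + (δb + M / 2 * R) * R / 4)
    (hAle : A ≤ (δb + M / 2 * R) * R + N)
    (hip : 2 * (δb + M / 2 * R) * ip = (δb + M / 2 * R) ^ 2 * R ^ 2 + A ^ 2 - N ^ 2) :
    min (A ^ 2 / (4 * δb)) (A * Real.sqrt (A / (3 * M))) ≤ t ^ 2 / δb + 2 / δb * a ^ 2 + ip := by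
  set lam : ℝ := δb + M / 2 * R with hlam
  clear_value lam
  have hMR : M * R = 2 * lam - 2 * δb := by rw [hlam]; ring
  have hMRnn : 0 ≤ M * R := mul_nonneg hM hR
  have hlampos : 0 < lam := by linarith
  have hlamδb : δb ≤ lam := by linarith
  have hipval : ip = (lam ^ 2 * R ^ 2 + A ^ 2 - N ^ 2) / (2 * lam) := by
    field_simp at hip ⊢; linarith
  have hN2 : δb * N ^ 2 ≤ δb * (t + a + lam * R / 4) ^ 2 := by
    apply mul_le_mul_of_nonneg_left _ hδb.le
    nlinarith
  -- reduction to polynomial form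
  have hred : ∀ B : ℝ, 4 * lam * t ^ 2 + 8 * lam * a ^ 2
      + 2 * δb * (lam ^ 2 * R ^ 2 + A ^ 2 - N ^ 2) - 4 * lam * δb * B ≥ 0 →
      B ≤ t ^ 2 / δb + 2 / δb * a ^ 2 + ip := by
    intro B hB
    have heq : t ^ 2 / δb + 2 / δb * a ^ 2 + ip - B
        = (4 * lam * t ^ 2 + 8 * lam * a ^ 2
          + 2 * δb * (lam ^ 2 * R ^ 2 + A ^ 2 - N ^ 2) - 4 * lam * δb * B)
          / (4 * lam * δb) := by
      rw [hipval]; field_simp [hδb.ne', hlampos.ne']; ring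
    have h2 : 0 ≤ (4 * lam * t ^ 2 + 8 * lam * a ^ 2
          + 2 * δb * (lam ^ 2 * R ^ 2 + A ^ 2 - N ^ 2) - 4 * lam * δb * B)
          / (4 * lam * δb) := div_nonneg (by linarith) (by nlinarith [mul_pos hlampos hδb])
    linarith
  have hBeq : 4 * lam * δb * (A ^ 2 / (4 * δb)) = lam * A ^ 2 := by
    field_simp
  rcases le_or_gt (M * R) (2 * δb) with hc | hc
  · -- Case 1 : lam ≤ 2 δb, first branch of min
    refine le_trans (min_le_left _ _) (hred _ ?_)
    rw [hBeq]
    have hlam2 : lam ≤ 2 * δb := by linarith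
    have p1 : 0 ≤ (2 * δb - lam) * A ^ 2 := mul_nonneg (by linarith) (sq_nonneg A)
    have p2 : 0 ≤ (lam - δb) * t ^ 2 := mul_nonneg (by linarith) (sq_nonneg t)
    have p3 : 0 ≤ (lam - δb) * a ^ 2 := mul_nonneg (by linarith) (sq_nonneg a)
    have p5 : 0 ≤ δb * (15 * (lam * R) - 4 * (t + a)) ^ 2 := mul_nonneg hδb.le (sq_nonneg _)
    have p6 : 0 ≤ δb * (7 * t - 8 * a) ^ 2 := mul_nonneg hδb.le (sq_nonneg _)
    have p7 : 0 ≤ δb * a ^ 2 := mul_nonneg hδb.le (sq_nonneg a)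
    linarith [p1, p2, p3, p5, p6, p7, hN2]
  · -- Case 2 : 2 δb < M R
    have hMpos : 0 < M := by nlinarith
    have hRpos : 0 < R := by nlinarith
    have hlam2 : 2 * δb ≤ lam := by linarith
    have hlamMR : lam ≤ M * R := by linarith
    have hMRlam : M * R ≤ 2 * lam := by linarith
    set K : ℝ := Real.sqrt (A / (3 * M)) with hKdef
    have hK0 : 0 ≤ K := Real.sqrt_nonneg _
    have hK2 : K ^ 2 = A / (3 * M) := Real.sq_sqrt (div_nonneg hA0 (by linarith))
    have hK3 : 3 * M * K ^ 2 = A := by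
      rw [hK2, mul_div_cancel₀ _ (ne_of_gt (by linarith : (0:ℝ) < 3 * M))]
    clear_value K
    rcases le_or_gt K R with hKR | hKR
    · -- subcase 2a : second branch of min
      refine le_trans (min_le_right _ _) (hred _ ?_)
      have hA2 : A ^ 2 = 9 * M ^ 2 * K ^ 4 := by rw [← hK3]; ring
      have hAK : 2 * lam * (A * K) = 6 * lam * (M * K ^ 3) := by rw [← hK3]; ring
      have c1 : 0 ≤ 6 * (M * K ^ 3) * (M * R - lam) :=
        mul_nonneg (mul_nonneg (by norm_num) (mul_nonneg hM (pow_nonneg hK0 3))) (by linarith)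
      have c2 : 0 ≤ M ^ 2 * (R - 2 * K) ^ 2 * (R ^ 2 + 4 * R * K + 12 * K ^ 2) :=
        mul_nonneg (mul_nonneg (sq_nonneg M) (sq_nonneg _))
          (by nlinarith [sq_nonneg R, sq_nonneg K, mul_nonneg hR hK0])
      have c3 : 0 ≤ R ^ 2 * (2 * lam - M * R) * (2 * lam + M * R) :=
        mul_nonneg (mul_nonneg (sq_nonneg R) (by linarith)) (by linarith)
      have c4 : 0 ≤ M ^ 2 * R ^ 4 := by positivity
      have key2a : 0 ≤ 13 / 16 * (lam ^ 2 * R ^ 2) + A ^ 2 - 2 * lam * (A * K) := by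
        rw [hA2, hAK]; linarith [c1, c2, c3, c4]
      have q3 : 0 ≤ 2 * δb * (13 / 16 * (lam ^ 2 * R ^ 2) + A ^ 2 - 2 * lam * (A * K)) :=
        mul_nonneg (by linarith) key2a
      have q1 : 0 ≤ (lam - 2 * δb) * t ^ 2 := mul_nonneg (by linarith) (sq_nonneg t)
      have q2 : 0 ≤ (lam - 2 * δb) * a ^ 2 := mul_nonneg (by linarith) (sq_nonneg a)
      have q5 : 0 ≤ δb * (lam * R - 2 * (t + a)) ^ 2 := mul_nonneg hδb.le (sq_nonneg _)
      have q6 : 0 ≤ δb * (5 * t - 3 * a) ^ 2 := mul_nonneg hδb.le (sq_nonneg _)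
      have q7 : 0 ≤ δb * a ^ 2 := mul_nonneg hδb.le (sq_nonneg a)
      linarith [q1, q2, q3, q5, q6, q7, hN2]
    · -- subcase 2b : first branch of min
      refine le_trans (min_le_left _ _) (hred _ ?_)
      rw [hBeq]
      have h3MR : 3 * M * R ^ 2 ≤ A := by
        have : 0 ≤ M * (K - R) * (K + R) :=
          mul_nonneg (mul_nonneg hM (by linarith)) (by linarith)
        nlinarith [hK3]
      have h6 : 6 * (lam - δb) * R ≤ A := by
        have e : 3 * M * R ^ 2 = 6 * (lam - δb) * R := by
          linear_combination 3 * R * hMR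
        linarith
      have hXA : 3 * (lam * R) ≤ A := by
        have : 0 ≤ R * (lam - 2 * δb) := mul_nonneg hR (by linarith)
        linarith [h6]
      have hNle' : N ≤ t + a + lam * R / 4 := hNle
      have hAy : 7 * A ≤ 12 * (t + a) := by linarith [hAle, hNle', hXA]
      rcases le_or_gt lam (12 * δb) with hl12 | hl12
      · have hy2 : 0 ≤ (lam - 2 * δb) * (144 * (t + a) ^ 2 - 49 * A ^ 2) := by
          apply mul_nonneg (by linarith)
          nlinarith [hAy, hA0]
        have hNy : 7 * N ≤ 8 * (t + a) := by linarith [hNle', hXA, hAy]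
        have hn2 : 0 ≤ δb * (64 * (t + a) ^ 2 - 49 * N ^ 2) := by
          apply mul_nonneg hδb.le
          nlinarith [hNy, hN0]
        have u3 : 0 ≤ lam * (t - 2 * a) ^ 2 := mul_nonneg hlampos.le (sq_nonneg _)
        have u4 : 0 ≤ δb * (lam * R) ^ 2 := mul_nonneg hδb.le (sq_nonneg _)
        have u5 : 0 ≤ (12 * δb - lam) * (t + a) ^ 2 := mul_nonneg (by linarith) (sq_nonneg _)
        linarith [hy2, hn2, u3, u4, u5]
      · have hX2 : 11 * (lam * R) ≤ 2 * A := by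
          have : 0 ≤ R * (lam - 12 * δb) := mul_nonneg hR (by linarith)
          linarith [h6]
        have hAy2 : 17 * A ≤ 22 * (t + a) := by linarith [hAle, hNle', hX2]
        have hNy : 17 * N ≤ 18 * (t + a) := by linarith [hNle', hX2, hAy2]
        have hy2 : 0 ≤ (lam - 2 * δb) * (484 * (t + a) ^ 2 - 289 * A ^ 2) := by
          apply mul_nonneg (by linarith)
          nlinarith [hAy2, hA0]
        have hn2 : 0 ≤ δb * (324 * (t + a) ^ 2 - 289 * N ^ 2) := by
          apply mul_nonneg hδb.le
          nlinarith [hNy, hN0]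
        have u3 : 0 ≤ lam * (t - 2 * a) ^ 2 := mul_nonneg hlampos.le (sq_nonneg _)
        have u4 : 0 ≤ δb * (lam * R) ^ 2 := mul_nonneg hδb.le (sq_nonneg _)
        have u5 : 0 ≤ lam * (t + a) ^ 2 := mul_nonneg hlampos.le (sq_nonneg _)
        have u6 : 0 ≤ δb * (t + a) ^ 2 := mul_nonneg hδb.le (sq_nonneg _)
        linarith [hy2, hn2, u3, u4, u5, u6]


lemma rpow_bridge (A M : ℝ) (hA : 0 ≤ A) (hM : 0 ≤ M) :
    A ^ ((3 : ℝ) / 2) * (1 / (3 * M)) ^ ((1 : ℝ) / 2) = A * Real.sqrt (A / (3 * M)) := by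
  rcases hM.eq_or_lt with hM0 | hMpos
  · rw [← hM0]
    norm_num
  · have h32 : ((3 : ℝ) / 2) = 1 + 1 / 2 := by norm_num
    rw [h32, Real.rpow_add' hA (by norm_num), Real.rpow_one]
    rw [← Real.sqrt_eq_rpow, ← Real.sqrt_eq_rpow]
    rw [mul_assoc, ← Real.sqrt_mul hA, mul_one_div]

 section AuxTaylor


variable {E : Type*} [NormedAddCommGroup E] [InnerProductSpace ℝ E] [CompleteSpace E]

lemma gradient_contDiff {f : E → ℝ} (hf : ContDiff ℝ 2 f) : ContDiff ℝ 1 (gradient f) := by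
  have h1 : ContDiff ℝ 1 (fderiv ℝ f) := hf.fderiv_right (by norm_num)
  have h2 : gradient f = fun x => (InnerProductSpace.toDual ℝ E).symm (fderiv ℝ f x) := rfl
  rw [h2]
  exact (InnerProductSpace.toDual ℝ E).symm.toContinuousLinearEquiv.contDiff.comp h1

lemma grad_taylor {f : E → ℝ} (L₂ : ℝ) (hL₂ : 0 ≤ L₂) (hf : ContDiff ℝ 2 f)
    (hLip : ∀ x y : E, ‖fderiv ℝ (gradient f) x - fderiv ℝ (gradient f) y‖ ≤ L₂ * ‖x - y‖)
    (v xp : E) :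
    ‖gradient f xp - gradient f v - fderiv ℝ (gradient f) v (xp - v)‖
      ≤ L₂ / 2 * ‖xp - v‖ ^ 2 := by
  have hg1 : ContDiff ℝ 1 (gradient f) := gradient_contDiff hf
  have hgd : Differentiable ℝ (gradient f) := hg1.differentiable one_ne_zero
  have hgc : Continuous (fun x => fderiv ℝ (gradient f) x) := hg1.continuous_fderiv one_ne_zero
  set r : E := xp - v with hr
  set φ : ℝ → E := fun θ => gradient f (v + θ • r) - θ • (fderiv ℝ (gradient f) v r) with hφdef
  have hline : ∀ θ : ℝ, HasDerivAt (fun θ : ℝ => v + θ • r) r θ := by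
    intro θ
    simpa using ((hasDerivAt_id θ).smul_const r).const_add v
  have hφ : ∀ θ : ℝ, HasDerivAt φ
      (fderiv ℝ (gradient f) (v + θ • r) r - fderiv ℝ (gradient f) v r) θ := by
    intro θ
    have h2 := ((hgd (v + θ • r)).hasFDerivAt).comp_hasDerivAt θ (hline θ)
    exact h2.sub (by simpa using (hasDerivAt_id θ).smul_const (fderiv ℝ (gradient f) v r))
  have hcont : Continuous fun θ : ℝ =>
      fderiv ℝ (gradient f) (v + θ • r) r - fderiv ℝ (gradient f) v r := by
    fun_prop
  have key : φ 1 - φ 0 = ∫ θ in (0:ℝ)..1,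
      (fderiv ℝ (gradient f) (v + θ • r) r - fderiv ℝ (gradient f) v r) :=
    (intervalIntegral.integral_eq_sub_of_hasDerivAt (fun θ _ => hφ θ)
      (hcont.intervalIntegrable 0 1)).symm
  have hφ1 : φ 1 - φ 0 = gradient f xp - gradient f v - fderiv ℝ (gradient f) v r := by
    simp only [hφdef, one_smul, zero_smul, sub_zero, add_zero]
    rw [hr]
    simp [add_sub_cancel]
    abel
  have hbound : ∀ θ ∈ Set.uIoc (0:ℝ) 1,
      ‖fderiv ℝ (gradient f) (v + θ • r) r - fderiv ℝ (gradient f) v r‖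
        ≤ (L₂ * ‖r‖ ^ 2) * θ := by
    intro θ hθ
    rw [Set.uIoc_of_le (by norm_num : (0:ℝ) ≤ 1)] at hθ
    have hθ0 : 0 ≤ θ := le_of_lt hθ.1
    have h1 : fderiv ℝ (gradient f) (v + θ • r) r - fderiv ℝ (gradient f) v r
        = (fderiv ℝ (gradient f) (v + θ • r) - fderiv ℝ (gradient f) v) r := by
      simp [ContinuousLinearMap.sub_apply]
    rw [h1]
    calc ‖(fderiv ℝ (gradient f) (v + θ • r) - fderiv ℝ (gradient f) v) r‖
        ≤ ‖fderiv ℝ (gradient f) (v + θ • r) - fderiv ℝ (gradient f) v‖ * ‖r‖ :=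
          ContinuousLinearMap.le_opNorm _ _
      _ ≤ (L₂ * ‖v + θ • r - v‖) * ‖r‖ :=
          mul_le_mul_of_nonneg_right (hLip _ _) (norm_nonneg r)
      _ = (L₂ * ‖r‖ ^ 2) * θ := by
          rw [add_sub_cancel_left, norm_smul, Real.norm_eq_abs, abs_of_nonneg hθ0]
          ring
  have hInt : ‖∫ θ in (0:ℝ)..1,
      (fderiv ℝ (gradient f) (v + θ • r) r - fderiv ℝ (gradient f) v r)‖
      ≤ L₂ / 2 * ‖r‖ ^ 2 := by
    have := intervalIntegral.norm_integral_le_of_norm_le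
      (g := fun θ => (L₂ * ‖r‖ ^ 2) * θ)
      (μ := MeasureTheory.volume) (a := 0) (b := 1)
      zero_le_one
      (MeasureTheory.ae_of_all _ (fun t ht => hbound t (by rwa [Set.uIoc_of_le zero_le_one])))
      (by apply Continuous.intervalIntegrable; fun_prop)
    have hval : (∫ θ in (0:ℝ)..1, (L₂ * ‖r‖ ^ 2) * θ) = L₂ / 2 * ‖r‖ ^ 2 := by
      rw [intervalIntegral.integral_const_mul, integral_id]
      ring
    rw [hval] at this
    calc ‖∫ θ in (0:ℝ)..1,
        (fderiv ℝ (gradient f) (v + θ • r) r - fderiv ℝ (gradient f) v r)‖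
        ≤ |L₂ / 2 * ‖r‖ ^ 2| := this.trans (le_abs_self _)
      _ = L₂ / 2 * ‖r‖ ^ 2 :=
          abs_of_nonneg (mul_nonneg (by linarith) (pow_nonneg (norm_nonneg r) 2))
  rw [← hφ1, key] at *
  exact hInt

end AuxTaylor

set_option maxHeartbeats 1600000 in
/-- Progress of the inexact cubic Newton step. -/
theorem inexact_cubic_newton_step_progress
    (d : ℕ) (f : EuclideanSpace ℝ (Fin d) → ℝ) (L₂ M : ℝ)
    (hf : ContDiff ℝ 2 f)
    (hLip : ∀ x y : EuclideanSpace ℝ (Fin d),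
      ‖fderiv ℝ (gradient f) x - fderiv ℝ (gradient f) y‖ ≤ L₂ * ‖x - y‖)
    (hM : 4 * L₂ ≤ M)
    (v xp g : EuclideanSpace ℝ (Fin d))
    (H : EuclideanSpace ℝ (Fin d) →L[ℝ] EuclideanSpace ℝ (Fin d))
    (hH : ∀ u w : EuclideanSpace ℝ (Fin d), ⟪H u, w⟫ = ⟪u, H w⟫)
    (δ₂ : ℝ) (hδ₂ : 0 ≤ δ₂)
    (hHin : ‖(H - fderiv ℝ (gradient f) v) (xp - v)‖ ≤ δ₂ * ‖xp - v‖)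
    (δb τ : ℝ) (hδb : 4 * δ₂ ≤ δb) (hδbpos : 0 < δb) (hτ : 0 ≤ τ)
    (hstep : ‖g + H (xp - v) + δb • (xp - v) + ((M / 2) * ‖xp - v‖) • (xp - v)‖ ≤ τ) :
    τ ^ 2 / δb + (2 / δb) * ‖g - gradient f v‖ ^ 2 + ⟪gradient f xp, v - xp⟫ ≥
      min (‖gradient f xp‖ ^ 2 / (4 * δb))
        (‖gradient f xp‖ ^ ((3 : ℝ) / 2) * (1 / (3 * M)) ^ ((1 : ℝ) / 2)) := by
  rcases Nat.eq_zero_or_pos d with hd | hd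
  · subst hd
    have hG : gradient f xp = (0 : EuclideanSpace ℝ (Fin 0)) := Subsingleton.elim _ _
    rw [hG, ge_iff_le]
    refine le_trans (min_le_left _ _) ?_
    simp only [norm_zero, inner_zero_left, add_zero]
    have h0 : ((0:ℝ)) ^ 2 / (4 * δb) = 0 := by norm_num
    rw [h0]
    positivity
  · -- main case
    have hL₂0 : 0 ≤ L₂ := by
      have h := hLip (EuclideanSpace.single (⟨0, hd⟩ : Fin d) (1:ℝ)) 0
      have hn : ‖(EuclideanSpace.single (⟨0, hd⟩ : Fin d) (1:ℝ)) - 0‖ = 1 := by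
        rw [sub_zero, EuclideanSpace.norm_single, norm_one]
      rw [hn, mul_one] at h
      exact le_trans (norm_nonneg _) h
    have hM0 : 0 ≤ M := by linarith
    have hTay := grad_taylor L₂ hL₂0 hf hLip v xp
    have hRnn : (0:ℝ) ≤ ‖xp - v‖ := norm_nonneg _
    have hlamnn : (0:ℝ) ≤ δb + M / 2 * ‖xp - v‖ := by nlinarith [mul_nonneg hM0 hRnn]
    -- the decomposition of s := ∇f(xp) + λ(xp−v)
    have hsval : gradient f xp + (δb + M / 2 * ‖xp - v‖) • (xp - v) =
        (g + H (xp - v) + δb • (xp - v) + ((M / 2) * ‖xp - v‖) • (xp - v))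
        + (gradient f v - g)
        + (-((H - fderiv ℝ (gradient f) v) (xp - v)))
        + (gradient f xp - gradient f v - fderiv ℝ (gradient f) v (xp - v)) := by
      simp only [ContinuousLinearMap.sub_apply]
      module
    have hN : ‖gradient f xp + (δb + M / 2 * ‖xp - v‖) • (xp - v)‖
        ≤ τ + ‖g - gradient f v‖ + δ₂ * ‖xp - v‖ + L₂ / 2 * ‖xp - v‖ ^ 2 := by
      rw [hsval]
      refine le_trans (norm_add_le _ _) ?_
      have h3 : ‖(g + H (xp - v) + δb • (xp - v) + ((M / 2) * ‖xp - v‖) • (xp - v))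
          + (gradient f v - g)
          + (-((H - fderiv ℝ (gradient f) v) (xp - v)))‖
          ≤ τ + ‖g - gradient f v‖ + δ₂ * ‖xp - v‖ := by
        refine le_trans (norm_add_le _ _) ?_
        have h2 : ‖(g + H (xp - v) + δb • (xp - v) + ((M / 2) * ‖xp - v‖) • (xp - v))
            + (gradient f v - g)‖ ≤ τ + ‖g - gradient f v‖ := by
          refine le_trans (norm_add_le _ _) ?_
          rw [norm_sub_rev (gradient f v) g]
          exact add_le_add_left hstep _
        rw [norm_neg]
        exact add_le_add h2 hHin
      exact add_le_add h3 hTay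
    have hA : ‖gradient f xp‖ ≤ (δb + M / 2 * ‖xp - v‖) * ‖xp - v‖
        + ‖gradient f xp + (δb + M / 2 * ‖xp - v‖) • (xp - v)‖ := by
      have hid : gradient f xp = (gradient f xp + (δb + M / 2 * ‖xp - v‖) • (xp - v))
          - (δb + M / 2 * ‖xp - v‖) • (xp - v) := by abel
      calc ‖gradient f xp‖
          = ‖(gradient f xp + (δb + M / 2 * ‖xp - v‖) • (xp - v))
            - (δb + M / 2 * ‖xp - v‖) • (xp - v)‖ := by rw [← hid]
        _ ≤ ‖gradient f xp + (δb + M / 2 * ‖xp - v‖) • (xp - v)‖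
            + ‖(δb + M / 2 * ‖xp - v‖) • (xp - v)‖ := norm_sub_le _ _
        _ = ‖gradient f xp + (δb + M / 2 * ‖xp - v‖) • (xp - v)‖
            + (δb + M / 2 * ‖xp - v‖) * ‖xp - v‖ := by
              rw [norm_smul, Real.norm_eq_abs, abs_of_nonneg hlamnn]
        _ = _ := by ring
    have hip : 2 * (δb + M / 2 * ‖xp - v‖) * ⟪gradient f xp, v - xp⟫
        = (δb + M / 2 * ‖xp - v‖) ^ 2 * ‖xp - v‖ ^ 2 + ‖gradient f xp‖ ^ 2
          - ‖gradient f xp + (δb + M / 2 * ‖xp - v‖) • (xp - v)‖ ^ 2 := by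
      have hsq : ‖gradient f xp + (δb + M / 2 * ‖xp - v‖) • (xp - v)‖ ^ 2
          = ‖gradient f xp‖ ^ 2
            + 2 * ((δb + M / 2 * ‖xp - v‖) * ⟪gradient f xp, xp - v⟫)
            + (δb + M / 2 * ‖xp - v‖) ^ 2 * ‖xp - v‖ ^ 2 := by
        rw [@norm_add_sq_real, real_inner_smul_right, norm_smul, Real.norm_eq_abs,
          mul_pow, sq_abs]
      have hvx : ⟪gradient f xp, v - xp⟫ = -⟪gradient f xp, xp - v⟫ := by
        rw [show v - xp = -(xp - v) by abel, inner_neg_right]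
      rw [hvx]
      linarith
    have hNle : ‖gradient f xp + (δb + M / 2 * ‖xp - v‖) • (xp - v)‖
        ≤ τ + ‖g - gradient f v‖ + (δb + M / 2 * ‖xp - v‖) * ‖xp - v‖ / 4 := by
      have h1 : δ₂ * ‖xp - v‖ ≤ δb / 4 * ‖xp - v‖ :=
        mul_le_mul_of_nonneg_right (by linarith) hRnn
      have h2 : L₂ / 2 * ‖xp - v‖ ^ 2 ≤ M / 8 * ‖xp - v‖ ^ 2 :=
        mul_le_mul_of_nonneg_right (by linarith) (sq_nonneg _)
      nlinarith [hN]
    have hmin := master_scalar τ ‖g - gradient f v‖ ‖xp - v‖ M δb ‖gradient f xp‖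
      ‖gradient f xp + (δb + M / 2 * ‖xp - v‖) • (xp - v)‖ ⟪gradient f xp, v - xp⟫
      hτ (norm_nonneg _) hRnn hM0 hδbpos (norm_nonneg _) (norm_nonneg _) hNle hA hip
    rw [ge_iff_le, rpow_bridge _ M (norm_nonneg _) hM0]
    exact hmin
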